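/- For every n ≥ 1, the number of revised ascent sequences of length n avoiding the pattern 321 equals 2^{n−1} − n + 1. -/

import Mathlib

/-- An endofunction of size `n`: values in `{1,…,n}` (indices are `Fin n`, 0-based). -/
def IsEndo (n : ℕ) (x : Fin n → ℕ) : Prop := ∀ i, 1 ≤ x i ∧ x i ≤ n

/-- The maximum value of `x`. -/
def maxVal (n : ℕ) (x : Fin n → ℕ) : ℕ := Finset.univ.sup x

/-- A Cayley permutation: an endofunction whose image is `{1,…,max x}`. -/
def IsCayley (n : ℕ) (x : Fin n → ℕ) : Prop :=
  IsEndo n x ∧ ∀ v, 1 ≤ v → v ≤ maxVal n x → ∃ i, x i = v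

/-- Ascent bottoms (0-based; index 0 always included). -/
def Ascbot (n : ℕ) (x : Fin n → ℕ) : Set (Fin n) :=
  {i | i.1 = 0 ∨ ∃ h : i.1 + 1 < n, x i < x ⟨i.1 + 1, h⟩}

/-- Indices of leftmost occurrences of values. -/
def Nub (n : ℕ) (x : Fin n → ℕ) : Set (Fin n) :=
  {i | ∀ j, j < i → x j ≠ x i}

/-- A revised ascent sequence. -/
def IsRAS (n : ℕ) (x : Fin n → ℕ) : Prop :=
  IsCayley n x ∧ Ascbot n x = Nub n x

/-- `x` avoids the pattern `321`. -/
def Avoids321 (n : ℕ) (x : Fin n → ℕ) : Prop :=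
  ¬ ∃ i j k : Fin n, i < j ∧ j < k ∧ x j < x i ∧ x k < x j

/-! Auxiliary development -/

/-- rank of `a` in `P`. -/
def rnk (P : Finset ℕ) (a : ℕ) : ℕ := (P.filter (fun b => b ≤ a)).card

/-- The structural word. -/
def wrd (n : ℕ) (P : Finset ℕ) (q : ℕ) : Fin n → ℕ := fun i =>
  if i.1 ∈ P then rnk P i.1
  else if q < i.1 then P.card else P.card + 1

def Good (n : ℕ) (P : Finset ℕ) (q : ℕ) : Prop :=
  P.Nonempty ∧ q ≤ n - 1 ∧ ∀ p ∈ P, 1 ≤ p ∧ p < q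

lemma rnk_le_card (P : Finset ℕ) (a : ℕ) : rnk P a ≤ P.card :=
  Finset.card_filter_le _ _

lemma one_le_rnk {P : Finset ℕ} {a : ℕ} (h : a ∈ P) : 1 ≤ rnk P a :=
  Finset.card_pos.2 ⟨a, Finset.mem_filter.2 ⟨h, le_refl a⟩⟩

lemma rnk_mono (P : Finset ℕ) {a b : ℕ} (h : a ≤ b) : rnk P a ≤ rnk P b :=
  Finset.card_le_card (fun c hc => by
    simp only [Finset.mem_filter] at *; exact ⟨hc.1, le_trans hc.2 h⟩)

lemma rnk_strict (P : Finset ℕ) {a b : ℕ} (hb : b ∈ P) (h : a < b) :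
    rnk P a < rnk P b := by
  apply Finset.card_lt_card
  constructor
  · exact fun c hc => by
      simp only [Finset.mem_filter] at *; exact ⟨hc.1, le_trans hc.2 (le_of_lt h)⟩
  · intro hsub
    have := hsub (Finset.mem_filter.2 ⟨hb, le_refl b⟩)
    simp only [Finset.mem_filter] at this
    omega

lemma rnk_injOn (P : Finset ℕ) : Set.InjOn (rnk P) ↑P := by
  intro a ha b hb hab
  by_contra hne
  rcases Nat.lt_or_ge a b with h | h
  · exact absurd hab (Nat.ne_of_lt (rnk_strict P hb h))
  · have : b < a := by omega
    exact absurd hab.symm (Nat.ne_of_lt (rnk_strict P ha this))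

lemma rnk_image (P : Finset ℕ) : P.image (rnk P) = Finset.Icc 1 P.card := by
  apply Finset.eq_of_subset_of_card_le
  · intro v hv
    rcases Finset.mem_image.1 hv with ⟨a, ha, rfl⟩
    exact Finset.mem_Icc.2 ⟨one_le_rnk ha, rnk_le_card P a⟩
  · rw [Finset.card_image_of_injOn (rnk_injOn P), Nat.card_Icc]
    omega

lemma eq_rnk_of_strictMono {P : Finset ℕ} {f : ℕ → ℕ} {m : ℕ}
    (hmono : ∀ a ∈ P, ∀ b ∈ P, a < b → f a < f b)
    (him : P.image f = Finset.Icc 1 m) :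
    ∀ a ∈ P, f a = rnk P a := by
  intro a ha
  have hinj : Set.InjOn f ↑P := by
    intro u hu v hv huv
    by_contra hne
    rcases Nat.lt_or_ge u v with h | h
    · exact absurd huv (Nat.ne_of_lt (hmono u hu v hv h))
    · exact absurd huv.symm (Nat.ne_of_lt (hmono v hv u hu (by omega)))
  have hfa : f a ∈ Finset.Icc 1 m := him ▸ Finset.mem_image_of_mem f ha
  have key : (P.filter (fun b => b ≤ a)).image f = Finset.Icc 1 (f a) := by
    apply Finset.Subset.antisymm
    · intro v hv
      rcases Finset.mem_image.1 hv with ⟨b, hb, rfl⟩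
      have hb' := Finset.mem_filter.1 hb
      have h1 : f b ∈ Finset.Icc 1 m := him ▸ Finset.mem_image_of_mem f hb'.1
      have h2 : f b ≤ f a := by
        rcases Nat.lt_or_ge b a with h | h
        · exact le_of_lt (hmono b hb'.1 a ha h)
        · have hba : b = a := by omega
          rw [hba]
      exact Finset.mem_Icc.2 ⟨(Finset.mem_Icc.1 h1).1, h2⟩
    · intro v hv
      have hv' := Finset.mem_Icc.1 hv
      have : v ∈ P.image f := by
        rw [him]; exact Finset.mem_Icc.2 ⟨hv'.1, le_trans hv'.2 (Finset.mem_Icc.1 hfa).2⟩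
      rcases Finset.mem_image.1 this with ⟨b, hb, rfl⟩
      have hba : b ≤ a := by
        by_contra hc
        have := hmono a ha b hb (by omega)
        omega
      exact Finset.mem_image_of_mem f (Finset.mem_filter.2 ⟨hb, hba⟩)
  have : ((P.filter (fun b => b ≤ a)).image f).card = rnk P a := by
    rw [Finset.card_image_of_injOn (hinj.mono (by
      intro c hc; exact (Finset.mem_filter.1 (by exact_mod_cast hc)).1))]
    rfl
  rw [key] at this
  rw [Nat.card_Icc] at this
  omega

lemma good_facts {n : ℕ} {P : Finset ℕ} {q : ℕ} (hg : Good n P q) :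
    2 ≤ q ∧ 3 ≤ n ∧ P.card + 1 ≤ n - 1 := by
  obtain ⟨⟨p0, hp0⟩, hq, hP⟩ := hg
  have h0 := hP p0 hp0
  have hq2 : 2 ≤ q := by omega
  have hsub : P ⊆ Finset.Icc 1 (q - 1) := by
    intro p hp
    have := hP p hp
    exact Finset.mem_Icc.2 ⟨this.1, by omega⟩
  have hcard : P.card ≤ q - 1 := by
    have := Finset.card_le_card hsub
    rwa [Nat.card_Icc] at this
  exact ⟨hq2, by omega, by omega⟩

lemma wrd_val_le {n : ℕ} {P : Finset ℕ} {q : ℕ} (i : Fin n) :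
    wrd n P q i ≤ P.card + 1 := by
  unfold wrd
  split
  · exact le_trans (rnk_le_card P i.1) (Nat.le_succ _)
  · split <;> omega

lemma wrd_mem {n : ℕ} {P : Finset ℕ} {q : ℕ} {i : Fin n} (h : i.1 ∈ P) :
    wrd n P q i = rnk P i.1 := by unfold wrd; simp [h]

lemma wrd_mid {n : ℕ} {P : Finset ℕ} {q : ℕ} {i : Fin n} (h : i.1 ∉ P)
    (h2 : i.1 ≤ q) : wrd n P q i = P.card + 1 := by
  unfold wrd; simp [h]; omega

lemma wrd_tail {n : ℕ} {P : Finset ℕ} {q : ℕ} {i : Fin n} (h : i.1 ∉ P)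
    (h2 : q < i.1) : wrd n P q i = P.card := by
  unfold wrd; simp [h, h2]

lemma wrd_zero {n : ℕ} {P : Finset ℕ} {q : ℕ} (hg : Good n P q) (h0 : 0 < n) :
    wrd n P q ⟨0, h0⟩ = P.card + 1 := by
  have : (0 : ℕ) ∉ P := fun h => by have := hg.2.2 0 h; omega
  exact wrd_mid this (Nat.zero_le q)

/-- key comparison: values are "weakly increasing or m" -/
lemma wrd_compare {n : ℕ} {P : Finset ℕ} {q : ℕ} (hg : Good n P q)
    {j k : Fin n} (hjk : j < k) (hj : wrd n P q j ≠ P.card + 1) :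
    wrd n P q j ≤ wrd n P q k := by
  have hPq := hg.2.2
  by_cases hjP : j.1 ∈ P
  · rw [wrd_mem hjP]
    by_cases hkP : k.1 ∈ P
    · rw [wrd_mem hkP]
      exact le_of_lt (rnk_strict P hkP hjk)
    · by_cases hkq : k.1 ≤ q
      · rw [wrd_mid hkP hkq]; exact le_trans (rnk_le_card P j.1) (Nat.le_succ _)
      · rw [wrd_tail hkP (by omega)]; exact rnk_le_card P j.1
  · by_cases hjq : j.1 ≤ q
    · exact absurd (wrd_mid hjP hjq) hj
    · have hkP : k.1 ∉ P := by
        intro hk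
        have := hPq k.1 hk
        have : (j : ℕ) < k := hjk
        omega
      rw [wrd_tail hjP (by omega), wrd_tail hkP (by
        have : (j : ℕ) < k := hjk; omega)]

lemma wrd_avoids {n : ℕ} {P : Finset ℕ} {q : ℕ} (hg : Good n P q) :
    Avoids321 n (wrd n P q) := by
  rintro ⟨i, j, k, hij, hjk, h1, h2⟩
  have hi := wrd_val_le (P := P) (q := q) i
  have hj : wrd n P q j ≠ P.card + 1 := by omega
  have := wrd_compare hg hjk hj
  omega

lemma wrd_maxVal {n : ℕ} {P : Finset ℕ} {q : ℕ} (hg : Good n P q) :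
    maxVal n (wrd n P q) = P.card + 1 := by
  have h3 := (good_facts hg).2.1
  have h0 : 0 < n := by omega
  apply le_antisymm
  · exact Finset.sup_le (fun i _ => wrd_val_le i)
  · rw [← wrd_zero hg h0]
    exact Finset.le_sup (Finset.mem_univ _)

lemma wrd_cayley {n : ℕ} {P : Finset ℕ} {q : ℕ} (hg : Good n P q) :
    IsCayley n (wrd n P q) := by
  obtain ⟨hq2, hn3, hcard⟩ := good_facts hg
  constructor
  · intro i
    refine ⟨?_, le_trans (wrd_val_le i) (by omega)⟩
    unfold wrd
    split
    · exact one_le_rnk (by assumption)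
    · split <;> [exact Nat.pos_of_ne_zero (by have := Finset.card_pos.2 hg.1; omega); omega]
  · intro v hv1 hv2
    rw [wrd_maxVal hg] at hv2
    rcases Nat.lt_or_ge v (P.card + 1) with h | h
    · have : v ∈ P.image (rnk P) := by
        rw [rnk_image]; exact Finset.mem_Icc.2 ⟨hv1, by omega⟩
      rcases Finset.mem_image.1 this with ⟨a, ha, rfl⟩
      have hlt : a < n := by have h1 := hg.2.2 a ha; have h2 := hg.2.1; omega
      exact ⟨⟨a, hlt⟩, wrd_mem ha⟩
    · have hveq : v = P.card + 1 := by omega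
      exact ⟨⟨0, by omega⟩, by rw [wrd_zero hg]; omega⟩

lemma wrd_ascbot_nub {n : ℕ} {P : Finset ℕ} {q : ℕ} (hg : Good n P q) :
    Ascbot n (wrd n P q) = Nub n (wrd n P q) := by
  obtain ⟨hq2, hn3, hcard⟩ := good_facts hg
  have hqn : q < n := by have := hg.2.1; omega
  have hPq := hg.2.2
  ext i
  simp only [Ascbot, Nub, Set.mem_setOf_eq]
  constructor
  · rintro (h0 | ⟨h, hasc⟩)
    · -- i = 0 : is first occurrence
      intro j hj
      have : j.1 < i.1 := hj
      omega
    · -- ascent: show i ∈ P (else no ascent), then first occurrence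
      have hiP : i.1 ∈ P := by
        by_contra hiP
        by_cases hiq : i.1 ≤ q
        · rw [wrd_mid hiP hiq] at hasc
          have := wrd_val_le (P := P) (q := q) ⟨i.1+1, h⟩
          omega
        · rw [wrd_tail hiP (by omega)] at hasc
          have hnp : (i.1+1) ∉ P := fun hm => by have := hPq _ hm; omega
          rw [wrd_tail hnp (show q < i.1+1 by omega)] at hasc
          omega
      intro j hj
      rw [wrd_mem hiP]
      have hji : j.1 < i.1 := hj
      by_cases hjP : j.1 ∈ P
      · rw [wrd_mem hjP]
        exact Nat.ne_of_lt (rnk_strict P hiP hji)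
      · have hjq : j.1 ≤ q := by have := hPq _ hiP; omega
        rw [wrd_mid hjP hjq]
        have := rnk_le_card P i.1
        omega
  · intro hnub
    by_cases h0 : i.1 = 0
    · exact Or.inl h0
    right
    -- first show i.1 ∈ P
    have hiP : i.1 ∈ P := by
      by_contra hiP
      by_cases hiq : i.1 ≤ q
      · -- value card+1, but position 0 has same value
        have := hnub ⟨0, by omega⟩ (by
          show (0:ℕ) < i.1; omega)
        rw [wrd_zero hg, wrd_mid hiP hiq] at this
        exact this rfl
      · -- value card; max of P has rnk = card
        obtain ⟨p0, hp0, hmax⟩ := Finset.exists_mem_eq_sup P hg.1 id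
        have hp0' := hPq p0 hp0
        have := hnub ⟨p0, by omega⟩ (by show p0 < i.1; omega)
        rw [wrd_mem (i := (⟨p0, by omega⟩ : Fin n)) hp0, wrd_tail hiP (by omega)] at this
        apply this
        show rnk P p0 = P.card
        unfold rnk
        congr 1
        apply Finset.filter_true_of_mem
        intro b hb
        have hble : b ≤ P.sup id := Finset.le_sup (f := id) hb
        simp only [id_eq] at hmax
        omega
    have hlt : i.1 + 1 < n := by have := hPq _ hiP; omega
    refine ⟨hlt, ?_⟩
    rw [wrd_mem hiP]
    by_cases hP1 : (i.1 + 1) ∈ P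
    · rw [wrd_mem (i := (⟨i.1+1, hlt⟩ : Fin n)) hP1]
      exact rnk_strict P hP1 (Nat.lt_succ_self _)
    · have : i.1 + 1 ≤ q := by have := hPq _ hiP; omega
      rw [wrd_mid (i := (⟨i.1+1, hlt⟩ : Fin n)) hP1 this]
      have := rnk_le_card P i.1
      omega

lemma wrd_RAS {n : ℕ} {P : Finset ℕ} {q : ℕ} (hg : Good n P q) :
    IsRAS n (wrd n P q) := ⟨wrd_cayley hg, wrd_ascbot_nub hg⟩


lemma wrd_inj {n : ℕ} {P P' : Finset ℕ} {q q' : ℕ} (hg : Good n P q)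
    (hg' : Good n P' q') (h : wrd n P q = wrd n P' q') : P = P' ∧ q = q' := by
  obtain ⟨hq2, hn3, hcard⟩ := good_facts hg
  obtain ⟨hq2', _, hcard'⟩ := good_facts hg'
  have h0 : 0 < n := by omega
  have hcards : P.card = P'.card := by
    have := congrFun h ⟨0, h0⟩
    rw [wrd_zero hg h0, wrd_zero hg' h0] at this
    omega
  -- q = q'
  have hqq : q = q' := by
    by_contra hne
    have key : ∀ (a b : ℕ) (Q Q' : Finset ℕ), Good n Q a → Good n Q' b →
        wrd n Q a = wrd n Q' b → Q.card = Q'.card → a < b → False := by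
      intro a b Q Q' hgQ hgQ' heq hc hab
      have hbn : b < n := by have := hgQ'.2.1; have := (good_facts hgQ').2.1; omega
      have hbQ : b ∉ Q := fun hm => by have := hgQ.2.2 b hm; omega
      have hbQ' : b ∉ Q' := fun hm => by have := hgQ'.2.2 b hm; omega
      have e1 : wrd n Q a ⟨b, hbn⟩ = Q.card := wrd_tail hbQ (show a < b from hab)
      have e2 : wrd n Q' b ⟨b, hbn⟩ = Q'.card + 1 := wrd_mid hbQ' (le_refl b)
      have := congrFun heq ⟨b, hbn⟩
      omega
    rcases Nat.lt_or_ge q q' with hlt | hge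
    · exact key q q' P P' hg hg' h hcards hlt
    · exact key q' q P' P hg' hg h.symm hcards.symm (by omega)
  refine ⟨?_, hqq⟩
  subst hqq
  have key2 : ∀ (Q Q' : Finset ℕ), Good n Q q → Good n Q' q →
      wrd n Q q = wrd n Q' q → Q.card = Q'.card → Q ⊆ Q' := by
    intro Q Q' hgQ hgQ' heq hc a ha
    have haq := hgQ.2.2 a ha
    have han : a < n := by have := hgQ.2.1; omega
    by_contra ha'
    have e1 : wrd n Q q ⟨a, han⟩ = rnk Q a := wrd_mem ha
    have e2 : wrd n Q' q ⟨a, han⟩ = Q'.card + 1 := wrd_mid ha' (show a ≤ q by omega)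
    have := congrFun heq ⟨a, han⟩
    have := rnk_le_card Q a
    omega
  exact Finset.Subset.antisymm (key2 P P' hg hg' h hcards)
    (key2 P' P hg' hg h.symm hcards.symm)

lemma const_one_RAS {n : ℕ} (hn : 1 ≤ n) :
    IsRAS n (fun _ => 1) ∧ Avoids321 n (fun _ => 1) := by
  have hmax : maxVal n (fun _ : Fin n => 1) = 1 := by
    unfold maxVal
    apply le_antisymm
    · exact Finset.sup_le (fun i _ => le_refl 1)
    · exact Finset.le_sup (f := fun _ : Fin n => 1) (Finset.mem_univ ⟨0, hn⟩)
  refine ⟨⟨⟨fun i => ⟨le_refl 1, hn⟩, ?_⟩, ?_⟩, ?_⟩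
  · intro v hv1 hv2
    rw [hmax] at hv2
    exact ⟨⟨0, hn⟩, by simp; omega⟩
  · ext i
    simp only [Ascbot, Nub, Set.mem_setOf_eq]
    constructor
    · rintro (h0 | ⟨h, hasc⟩)
      · intro j hj
        have : j.1 < i.1 := hj
        omega
      · omega
    · intro hnub
      left
      by_contra h0
      have := hnub ⟨0, by omega⟩ (by show (0:ℕ) < i.1; omega)
      exact this rfl
  · rintro ⟨i, j, k, _, _, h1, h2⟩
    simp at h1


/-- backward structure theorem -/
lemma structure_thm {n : ℕ} (hn : 1 ≤ n) {x : Fin n → ℕ}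
    (hx : IsRAS n x) (ha : Avoids321 n x) :
    x = (fun _ => 1) ∨ ∃ P q, Good n P q ∧ x = wrd n P q := by
  set m := maxVal n x with hm
  have hub : ∀ i, x i ≤ m := fun i => Finset.le_sup (Finset.mem_univ i)
  have hlb : ∀ i, 1 ≤ x i := fun i => (hx.1.1 i).1
  have h0n : 0 < n := hn
  have huniv : (Finset.univ : Finset (Fin n)).Nonempty := ⟨⟨0, h0n⟩, Finset.mem_univ _⟩
  have hm1 : 1 ≤ m := le_trans (hlb ⟨0, h0n⟩) (hub ⟨0, h0n⟩)
  rcases Nat.lt_or_ge m 2 with hm2 | hm2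
  · left
    funext i
    have := hub i; have := hlb i
    omega
  right
  have hAN := hx.2
  -- Fact B : first occurrences (other than 0) are followed by strictly larger
  have factB : ∀ i : Fin n, (∀ j, j < i → x j ≠ x i) → i.1 ≠ 0 →
      ∃ h : i.1 + 1 < n, x i < x ⟨i.1 + 1, h⟩ := by
    intro i hnub h0
    have : i ∈ Ascbot n x := hAN ▸ hnub
    rcases this with h | h
    · omega
    · exact h
  -- Fact A : repeats are not followed by strictly larger
  have factA : ∀ i j : Fin n, i < j → x i = x j → ∀ h : j.1 + 1 < n,
      x ⟨j.1 + 1, h⟩ ≤ x j := by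
    intro i j hij heq h
    have hj : j ∉ Nub n x := by
      intro hnub
      exact hnub i hij heq
    rw [← hAN] at hj
    simp only [Ascbot, Set.mem_setOf_eq, not_or, not_exists, not_lt] at hj
    exact hj.2 h
  -- first occurrence of the max is at position 0
  have F0 : x ⟨0, h0n⟩ = m := by
    obtain ⟨i, -, hi⟩ := Finset.exists_mem_eq_sup Finset.univ huniv x
    have hne : (Finset.univ.filter (fun j => x j = m)).Nonempty :=
      ⟨i, Finset.mem_filter.2 ⟨Finset.mem_univ _, hi.symm⟩⟩
    set i0 := (Finset.univ.filter (fun j => x j = m)).min' hne with hi0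
    have hmem := Finset.min'_mem _ hne
    rw [← hi0] at hmem
    have hxi0 : x i0 = m := (Finset.mem_filter.1 hmem).2
    have hnub : ∀ j, j < i0 → x j ≠ x i0 := by
      intro j hj hj2
      have : i0 ≤ j := Finset.min'_le _ j (Finset.mem_filter.2
        ⟨Finset.mem_univ _, by rw [hj2, hxi0]⟩)
      exact absurd hj (not_lt.2 this)
    by_cases h0 : i0.1 = 0
    · have : (⟨0, h0n⟩ : Fin n) = i0 := Fin.ext (by simp [h0])
      rw [this, hxi0]
    · obtain ⟨h, hasc⟩ := factB i0 hnub h0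
      have := hub ⟨i0.1 + 1, h⟩
      omega
  -- Fact C : weak increase of non-max values
  have factC : ∀ j k : Fin n, j < k → x j ≠ m → x j ≤ x k := by
    intro j k hjk hjm
    by_contra hc
    have hj0 : j.1 ≠ 0 := by
      intro h0
      have : (⟨0, h0n⟩ : Fin n) = j := Fin.ext (by simp [h0])
      rw [this] at F0
      exact hjm F0
    apply ha
    refine ⟨⟨0, h0n⟩, j, k, ?_, hjk, ?_, by omega⟩
    · show (0 : ℕ) < j.1; omega
    · rw [F0]; have := hub j; omega
  -- Fact D : a repeated non-max value persists to the end
  have factD : ∀ i j : Fin n, i < j → x i = x j → x j ≠ m →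
      ∀ k, j < k → x k = x j := by
    intro i j hij heq hjm
    have key : ∀ d : ℕ, ∀ k : Fin n, k.1 = j.1 + 1 + d → x k = x j := by
      intro d
      induction d with
      | zero =>
        intro k hk
        have h : j.1 + 1 < n := by omega
        have hkj : (⟨j.1 + 1, h⟩ : Fin n) = k := Fin.ext (by simpa using hk.symm)
        have h1 := factA i j hij heq h
        have h2 : x j ≤ x k := factC j k (show j.1 < k.1 by omega) hjm
        rw [hkj] at h1
        omega
      | succ d ih =>
        intro k hk
        have hk' : j.1 + 1 + d < n := by omega
        set k' : Fin n := ⟨j.1 + 1 + d, hk'⟩ with hk'd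
        have ihk : x k' = x j := ih k' rfl
        have h : k'.1 + 1 < n := by simp [hk'd]; omega
        have hkj : (⟨k'.1 + 1, h⟩ : Fin n) = k := Fin.ext (by simp [hk'd]; omega)
        have h1 := factA j k' (show j.1 < k'.1 by simp [hk'd]; omega) ihk.symm h
        have h2 : x k' ≤ x k := factC k' k (show k'.1 < k.1 by simp [hk'd]; omega)
          (by rw [ihk]; exact hjm)
        rw [hkj] at h1
        omega
    intro k hjk
    exact key (k.1 - j.1 - 1) k (by have : j.1 < k.1 := hjk; omega)
  -- first occurrences of small values exist
  have hfirst : ∀ v, 1 ≤ v → v < m → ∃ i : Fin n,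
      x i = v ∧ (∀ j, j < i → x j ≠ x i) := by
    intro v hv1 hv2
    obtain ⟨i, hi⟩ := hx.1.2 v hv1 (by omega)
    have hne : (Finset.univ.filter (fun j => x j = v)).Nonempty :=
      ⟨i, Finset.mem_filter.2 ⟨Finset.mem_univ _, hi⟩⟩
    set i0 := (Finset.univ.filter (fun j => x j = v)).min' hne with hi0
    have hmem := Finset.min'_mem _ hne
    rw [← hi0] at hmem
    have hxi0 : x i0 = v := (Finset.mem_filter.1 hmem).2
    refine ⟨i0, hxi0, ?_⟩
    intro j hj hj2
    have : i0 ≤ j := Finset.min'_le _ j (Finset.mem_filter.2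
      ⟨Finset.mem_univ _, by rw [hj2, hxi0]⟩)
    exact absurd hj (not_lt.2 this)
  -- the sets P and q
  classical
  set P0 : Finset (Fin n) := Finset.univ.filter
    (fun i => x i < m ∧ ∀ j, j < i → x j ≠ x i) with hP0
  set P : Finset ℕ := P0.image Fin.val with hP
  have hmemP : ∀ a : ℕ, a ∈ P ↔ ∃ h : a < n, x ⟨a, h⟩ < m ∧
      ∀ j, j < (⟨a, h⟩ : Fin n) → x j ≠ x ⟨a, h⟩ := by
    intro a
    constructor
    · intro haP
      rcases Finset.mem_image.1 haP with ⟨i, hi, rfl⟩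
      have := Finset.mem_filter.1 hi
      exact ⟨i.isLt, by
        have : (⟨i.1, i.isLt⟩ : Fin n) = i := Fin.ext rfl
        rw [this]; exact (Finset.mem_filter.1 hi).2⟩
    · rintro ⟨h, h1, h2⟩
      exact Finset.mem_image.2 ⟨⟨a, h⟩, Finset.mem_filter.2
        ⟨Finset.mem_univ _, h1, h2⟩, rfl⟩
  have hQne : (Finset.univ.filter (fun j => x j = m)).Nonempty := by
    obtain ⟨i, -, hi⟩ := Finset.exists_mem_eq_sup Finset.univ huniv x
    exact ⟨i, Finset.mem_filter.2 ⟨Finset.mem_univ _, hi.symm⟩⟩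
  set q0 : Fin n := (Finset.univ.filter (fun j => x j = m)).max' hQne with hq0
  have hle_q0 : ∀ i : Fin n, x i = m → i ≤ q0 := by
    intro i hi
    rw [hq0]
    exact Finset.le_max' _ i (Finset.mem_filter.2 ⟨Finset.mem_univ _, hi⟩)
  have hxq0 : x q0 = m := by
    have := Finset.max'_mem _ hQne
    rw [← hq0] at this
    exact (Finset.mem_filter.1 this).2
  have hq_last : ∀ i : Fin n, q0 < i → x i ≠ m := by
    intro i hi hc
    exact absurd hi (not_lt.2 (hle_q0 i hc))
  set q : ℕ := q0.1 with hqdef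
  -- positions in P are nonzero
  have hPpos : ∀ i : Fin n, i ∈ P0 → i.1 ≠ 0 := by
    intro i hi h0
    have h1 := (Finset.mem_filter.1 hi).2.1
    have : (⟨0, h0n⟩ : Fin n) = i := Fin.ext (by simp [h0])
    rw [this] at F0
    omega
  -- first occurrence of m-1
  obtain ⟨p', hp'v, hp'nub⟩ := hfirst (m - 1) (by omega) (by omega)
  have hp'P0 : p' ∈ P0 := Finset.mem_filter.2 ⟨Finset.mem_univ _, by omega, hp'nub⟩
  -- m follows right after p'
  have hp'succ : p'.1 + 1 ≤ q := by
    obtain ⟨h, hasc⟩ := factB p' hp'nub (hPpos p' hp'P0)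
    have hsm : x ⟨p'.1 + 1, h⟩ = m := by
      have := hub ⟨p'.1 + 1, h⟩
      omega
    exact hle_q0 _ hsm
  -- every element of P0 is < q
  have hPlt : ∀ i : Fin n, i ∈ P0 → i.1 < q := by
    intro i hi
    obtain ⟨-, hilt, hinub⟩ := Finset.mem_filter.1 hi
    rcases lt_trichotomy i p' with h | h | h
    · have : i.1 < p'.1 := h
      omega
    · rw [h]; omega
    · -- p' < i : then x i ≥ m - 1, and x i < m so x i = m-1; but then i isn't first
      have hle : x p' ≤ x i := factC p' i h (by omega)
      have : x i = m - 1 := by omega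
      exact absurd (hinub p' h (by omega)) (by simp)
  have hPsmall : ∀ i : Fin n, i ∈ P0 → 1 ≤ x i ∧ x i ≤ m - 1 := by
    intro i hi
    have := (Finset.mem_filter.1 hi).2.1
    have := hlb i
    omega
  -- x is strictly monotone on P0 positions
  have hmonoP : ∀ i : Fin n, i ∈ P0 → ∀ j : Fin n, j ∈ P0 → i < j → x i < x j := by
    intro i hi j hj hij
    have h1 : x i ≤ x j := factC i j hij (by have := hPsmall i hi; omega)
    have h2 : x i ≠ x j := fun he => (Finset.mem_filter.1 hj).2.2 i hij he
    omega
  -- ℕ-version of x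
  set xn : ℕ → ℕ := fun a => if h : a < n then x ⟨a, h⟩ else 0 with hxn
  have hxn_eq : ∀ i : Fin n, xn i.1 = x i := by
    intro i
    simp only [hxn, i.isLt, dif_pos]
  have hmono : ∀ a ∈ P, ∀ b ∈ P, a < b → xn a < xn b := by
    intro a haP b hbP hab
    rcases Finset.mem_image.1 haP with ⟨i, hi, rfl⟩
    rcases Finset.mem_image.1 hbP with ⟨j, hj, rfl⟩
    rw [hxn_eq, hxn_eq]
    exact hmonoP i hi j hj hab
  have him : P.image xn = Finset.Icc 1 (m - 1) := by
    apply Finset.Subset.antisymm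
    · intro v hv
      rcases Finset.mem_image.1 hv with ⟨a, haP, rfl⟩
      rcases Finset.mem_image.1 haP with ⟨i, hi, rfl⟩
      rw [hxn_eq]
      exact Finset.mem_Icc.2 (hPsmall i hi)
    · intro v hv
      rw [Finset.mem_Icc] at hv
      obtain ⟨i, hiv, hinub⟩ := hfirst v hv.1 (by omega)
      have hiP0 : i ∈ P0 := Finset.mem_filter.2 ⟨Finset.mem_univ _, by omega, hinub⟩
      refine Finset.mem_image.2 ⟨i.1, Finset.mem_image.2 ⟨i, hiP0, rfl⟩, ?_⟩
      rw [hxn_eq]; exact hiv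
  have hcardP : P.card = m - 1 := by
    have hinj : Set.InjOn xn ↑P := by
      intro u hu v hv huv
      by_contra hne
      rcases Nat.lt_or_ge u v with h | h
      · exact absurd huv (Nat.ne_of_lt (hmono u (by exact_mod_cast hu) v
          (by exact_mod_cast hv) h))
      · exact absurd huv.symm (Nat.ne_of_lt (hmono v (by exact_mod_cast hv) u
          (by exact_mod_cast hu) (by omega)))
    have := Finset.card_image_of_injOn hinj
    rw [him, Nat.card_Icc] at this
    omega
  have hgood : Good n P q := by
    refine ⟨?_, ?_, ?_⟩
    · exact ⟨p'.1, Finset.mem_image.2 ⟨p', hp'P0, rfl⟩⟩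
    · have := q0.isLt; omega
    · intro p hp
      rcases Finset.mem_image.1 hp with ⟨i, hi, rfl⟩
      exact ⟨by have := hPpos i hi; omega, hPlt i hi⟩
  refine ⟨P, q, hgood, ?_⟩
  funext i
  by_cases hiP : i.1 ∈ P
  · rw [wrd_mem hiP]
    have := eq_rnk_of_strictMono hmono him i.1 hiP
    rw [← this, hxn_eq]
  · by_cases hiq : i.1 ≤ q
    · rw [wrd_mid hiP hiq, hcardP]
      -- show x i = m
      by_contra hc
      have hxi : x i < m := by have := hub i; omega
      have hi0 : i.1 ≠ 0 := by
        intro h0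
        have : (⟨0, h0n⟩ : Fin n) = i := Fin.ext (by simp [h0])
        rw [this] at F0
        omega
      -- i is not a first occurrence
      have : ¬ (∀ j, j < i → x j ≠ x i) := by
        intro hnub
        exact hiP (Finset.mem_image.2 ⟨i, Finset.mem_filter.2
          ⟨Finset.mem_univ _, hxi, hnub⟩, rfl⟩)
      push_neg at this
      obtain ⟨j, hji, hjx⟩ := this
      -- everything after i equals x i, but q0 is at or after i with value m
      rcases lt_trichotomy i q0 with h | h | h
      · have := factD j i hji hjx (by omega) q0 h
        omega
      · rw [← h] at hxq0
        omega
      · have : q < i.1 := h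
        omega
    · rw [wrd_tail hiP (by omega), hcardP]
      have hxm : x i ≠ m := hq_last i (by show q0.1 < i.1; omega)
      have hp'lt : p' < i := by
        have h1 : p'.1 < q := by omega
        show p'.1 < i.1
        omega
      have := factC p' i hp'lt (by omega)
      have := hub i
      omega


theorem stmt11 (n : ℕ) (hn : 1 ≤ n) :
    {x : Fin n → ℕ | IsRAS n x ∧ Avoids321 n x}.ncard = 2 ^ (n - 1) - n + 1 := by
  classical
  set s : Finset ℕ := Finset.Icc 1 (n - 1) with hs
  set T : Finset (Finset ℕ) := s.powerset.filter (fun A => 2 ≤ A.card) with hT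
  set g : Finset ℕ → (Fin n → ℕ) :=
    fun A => wrd n (A.erase (A.sup id)) (A.sup id) with hg
  set F : Finset (Fin n → ℕ) := insert (fun _ => 1) (T.image g) with hF
  -- membership in T gives Good
  have hTgood : ∀ A ∈ T, Good n (A.erase (A.sup id)) (A.sup id) := by
    intro A hA
    rw [hT, Finset.mem_filter, Finset.mem_powerset] at hA
    obtain ⟨hsub, hcard⟩ := hA
    have hAne : A.Nonempty := Finset.card_pos.1 (by omega)
    obtain ⟨a, haA, hsup⟩ := Finset.exists_mem_eq_sup A hAne id
    have hsupA : A.sup id ∈ A := by rw [hsup]; exact haA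
    have hmemIcc : ∀ b ∈ A, 1 ≤ b ∧ b ≤ n - 1 := by
      intro b hb
      have := hsub hb
      rw [hs, Finset.mem_Icc] at this
      exact this
    refine ⟨?_, (hmemIcc _ hsupA).2, ?_⟩
    · apply Finset.card_pos.1
      rw [Finset.card_erase_of_mem hsupA]
      omega
    · intro p hp
      have hp' := Finset.mem_erase.1 hp
      have hle : p ≤ A.sup id := Finset.le_sup (f := id) hp'.2
      exact ⟨(hmemIcc p hp'.2).1, lt_of_le_of_ne hle hp'.1⟩
  -- set equality
  have hset : {x : Fin n → ℕ | IsRAS n x ∧ Avoids321 n x} = ↑F := by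
    ext x
    simp only [Set.mem_setOf_eq, hF, Finset.coe_insert, Set.mem_insert_iff,
      Finset.coe_image, Set.mem_image, Finset.mem_coe]
    constructor
    · rintro ⟨hras, hav⟩
      rcases structure_thm hn hras hav with h | ⟨P, q, hgood, rfl⟩
      · exact Or.inl h
      · right
        refine ⟨insert q P, ?_, ?_⟩
        · rw [hT, Finset.mem_filter, Finset.mem_powerset]
          have hq2 := (good_facts hgood).1
          obtain ⟨hPne, hq, hPq⟩ := hgood
          constructor
          · intro b hb
            rw [hs, Finset.mem_Icc]
            rcases Finset.mem_insert.1 hb with rfl | hb'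
            · omega
            · have := hPq b hb'; omega
          · have hqP : q ∉ P := fun h => by have := hPq q h; omega
            rw [Finset.card_insert_of_notMem hqP]
            have := Finset.card_pos.2 hPne
            omega
        · have hqP : q ∉ P := fun h => by have := hgood.2.2 q h; omega
          have hsup : (insert q P).sup id = q := by
            rw [Finset.sup_insert]
            have : P.sup id ≤ q := Finset.sup_le (fun b hb => le_of_lt (hgood.2.2 b hb).2)
            simp only [id_eq]
            exact sup_eq_left.2 this
          rw [hg]
          simp only [hsup, Finset.erase_insert hqP]
    · rintro (rfl | ⟨A, hA, rfl⟩)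
      · exact const_one_RAS hn
      · have := hTgood A hA
        exact ⟨wrd_RAS this, wrd_avoids this⟩
  rw [hset, Set.ncard_coe_finset]
  -- const 1 is not of the form g A
  have hnot : (fun _ : Fin n => (1 : ℕ)) ∉ T.image g := by
    intro hmem
    rcases Finset.mem_image.1 hmem with ⟨A, hA, heq⟩
    have hgood := hTgood A hA
    have h0 : 0 < n := by have := (good_facts hgood).2.1; omega
    have := congrFun heq ⟨0, h0⟩
    rw [hg] at this
    simp only at this
    rw [wrd_zero hgood h0] at this
    have := Finset.card_pos.2 hgood.1
    omega
  have hinj : Set.InjOn g ↑T := by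
    intro A hA B hB hAB
    have hgA := hTgood A (by exact_mod_cast hA)
    have hgB := hTgood B (by exact_mod_cast hB)
    obtain ⟨he, hq⟩ := wrd_inj hgA hgB hAB
    have hmemsup : ∀ C : Finset ℕ, C ∈ T →
        C = insert (C.sup id) (C.erase (C.sup id)) := by
      intro C hC
      rw [hT, Finset.mem_filter, Finset.mem_powerset] at hC
      have hCne : C.Nonempty := Finset.card_pos.1 (by omega)
      obtain ⟨a, haC, hsup⟩ := Finset.exists_mem_eq_sup C hCne id
      have hmem : C.sup id ∈ C := by rw [hsup]; exact haC
      exact (Finset.insert_erase hmem).symm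
    rw [hmemsup A (by exact_mod_cast hA), hmemsup B (by exact_mod_cast hB), he, hq]
  have hFcard : F.card = T.card + 1 := by
    rw [hF, Finset.card_insert_of_notMem hnot, Finset.card_image_of_injOn hinj]
  -- counting T
  have hscard : s.card = n - 1 := by rw [hs, Nat.card_Icc]; omega
  have hTcard : T.card + n = 2 ^ (n - 1) := by
    have hsplit := Finset.card_filter_add_card_filter_not
      (s := s.powerset) (p := fun A => 2 ≤ A.card)
    rw [Finset.card_powerset, hscard] at hsplit
    have hneg : (s.powerset.filter (fun A => ¬ 2 ≤ A.card)) =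
        Finset.powersetCard 0 s ∪ Finset.powersetCard 1 s := by
      rw [Finset.powersetCard_eq_filter, Finset.powersetCard_eq_filter,
        ← Finset.filter_or]
      apply Finset.filter_congr
      intro A _
      constructor
      · intro h; omega
      · intro h; omega
    have hdisj : Disjoint (Finset.powersetCard 0 s) (Finset.powersetCard 1 s) := by
      rw [Finset.disjoint_left]
      intro A h0 h1
      rw [Finset.mem_powersetCard] at h0 h1
      omega
    rw [hneg, Finset.card_union_of_disjoint hdisj, Finset.card_powersetCard,
      Finset.card_powersetCard, hscard, Nat.choose_zero_right,
      Nat.choose_one_right] at hsplit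
    rw [← hT] at hsplit
    omega
  have hpow : n ≤ 2 ^ (n - 1) := by
    have : n - 1 < 2 ^ (n - 1) := Nat.lt_two_pow_self
    omega
  omega
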